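/- For f ∈ [0,1], the depolarized T gate, i.e. the channel Λ_{f,π/4}(ρ) = f · U ρ U† + (1 − f) · Tr(ρ) · I/2 with U = diag(e^{−iπ/8}, e^{iπ/8}), satisfies D(Λ_{f,π/4}) ≤ 1 if and only if f ≤ 2^{−1/2}; that is, the depolarized T gate is simulable by Pauli propagation exactly when its fidelity is at most 1/√2. -/

import Mathlib

open Matrix BigOperators Kronecker

noncomputable section

/-- The four single-qubit Pauli matrices `I, X, Y, Z`. -/
def pauli1 : Fin 4 → Matrix (Fin 2) (Fin 2) ℂ :=
  ![(1 : Matrix (Fin 2) (Fin 2) ℂ),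
    !![0, 1; 1, 0],
    !![0, -Complex.I; Complex.I, 0],
    !![1, 0; 0, -1]]

/-- Stabilizer norm of a single-qubit (2×2) matrix: `D(A) = (1/2) Σ_{σ ∈ P_1} |Tr(σ A)|`. -/
def stabNorm1 (A : Matrix (Fin 2) (Fin 2) ℂ) : ℝ :=
  (∑ i : Fin 4, ‖(pauli1 i * A).trace‖) / 2

/-- Channel stabilizer norm of a single-qubit channel: `D(Λ) = max_{σ ∈ P_1} D(Λ(σ))`. -/
def chanNorm1 (Λ : Matrix (Fin 2) (Fin 2) ℂ →ₗ[ℂ] Matrix (Fin 2) (Fin 2) ℂ) : ℝ :=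
  ⨆ i : Fin 4, stabNorm1 (Λ (pauli1 i))

/-- Pauli transfer matrix of a single-qubit channel: `(R_Λ)_{ij} = (1/2) Tr(σ_i Λ(σ_j))`. -/
def ptm1 (Λ : Matrix (Fin 2) (Fin 2) ℂ →ₗ[ℂ] Matrix (Fin 2) (Fin 2) ℂ) :
    Matrix (Fin 4) (Fin 4) ℂ :=
  Matrix.of fun i j => (pauli1 i * Λ (pauli1 j)).trace / 2

/-- The Z-rotation unitary `U = diag(e^{-iθ/2}, e^{iθ/2})`. -/
def rotZ (θ : ℝ) : Matrix (Fin 2) (Fin 2) ℂ :=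
  Matrix.diagonal ![Complex.exp (-((θ : ℂ) / 2) * Complex.I),
                    Complex.exp (((θ : ℂ) / 2) * Complex.I)]

lemma key (a b : ℂ) (x : ℂ) : Complex.exp a * x * Complex.exp b = Complex.exp (a + b) * x := by
  rw [Complex.exp_add]; ring

lemma c2 : (starRingEnd ℂ) 2 = 2 := by
  rw [show (2:ℂ) = ((2:ℝ):ℂ) by norm_num, Complex.conj_ofReal]

lemma conj1 (θ : ℝ) (ρ : Matrix (Fin 2) (Fin 2) ℂ) :
    rotZ θ * ρ * (rotZ θ)ᴴ =
      !![ρ 0 0, Complex.exp (-(θ:ℂ)*Complex.I) * ρ 0 1;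
         Complex.exp ((θ:ℂ)*Complex.I) * ρ 1 0, ρ 1 1] := by
  ext i j
  fin_cases i <;> fin_cases j <;>
    simp [rotZ, Matrix.mul_apply, Matrix.diagonal_conjTranspose, Fin.sum_univ_succ,
      ← Complex.exp_conj, _root_.map_mul, map_neg, map_div₀, Complex.conj_I, Complex.conj_ofReal,
      c2, key, ← Complex.exp_add] <;>
    ring_nf <;> simp [Complex.exp_zero]

lemma vec4_three {α : Type*} (a b c d : α) : (![a, b, c, d] : Fin 4 → α) 3 = d := rfl

lemma trace_mul_fin_two (A B : Matrix (Fin 2) (Fin 2) ℂ) :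
    (A * B).trace = A 0 0 * B 0 0 + A 0 1 * B 1 0 + A 1 0 * B 0 1 + A 1 1 * B 1 1 := by
  simp [Matrix.trace_fin_two, Matrix.mul_apply, Fin.sum_univ_succ]; ring

lemma expp : Complex.exp ((↑(Real.pi/4):ℂ)*Complex.I)
    = (↑(Real.sqrt 2/2) + ↑(Real.sqrt 2/2)*Complex.I : ℂ) := by
  rw [Complex.exp_mul_I, ← Complex.ofReal_cos, ← Complex.ofReal_sin,
    Real.cos_pi_div_four, Real.sin_pi_div_four]

lemma expm : Complex.exp (-(↑(Real.pi/4):ℂ)*Complex.I)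
    = (↑(Real.sqrt 2/2) - ↑(Real.sqrt 2/2)*Complex.I : ℂ) := by
  rw [Complex.exp_mul_I, Complex.cos_neg, Complex.sin_neg, ← Complex.ofReal_cos,
    ← Complex.ofReal_sin, Real.cos_pi_div_four, Real.sin_pi_div_four]
  ring

/-- The depolarized `T` gate, i.e. the channel
`Λ_{f,π/4}(ρ) = f · U ρ U† + (1 − f) Tr(ρ) I/2` with `U = diag(e^{-iπ/8}, e^{iπ/8})`,
satisfies `D(Λ_{f,π/4}) ≤ 1` if and only if `f ≤ 1/√2`. -/
theorem depolarized_T_simulable_iff (f : ℝ) (hf : f ∈ Set.Icc (0 : ℝ) 1)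
    (Λ : Matrix (Fin 2) (Fin 2) ℂ →ₗ[ℂ] Matrix (Fin 2) (Fin 2) ℂ)
    (hΛ : ∀ ρ : Matrix (Fin 2) (Fin 2) ℂ,
      Λ ρ = (f : ℂ) • (rotZ (Real.pi / 4) * ρ * (rotZ (Real.pi / 4))ᴴ) +
            ((1 - f : ℝ) : ℂ) • (ρ.trace • ((2 : ℂ)⁻¹ • (1 : Matrix (Fin 2) (Fin 2) ℂ)))) :
    chanNorm1 Λ ≤ 1 ↔ f ≤ (Real.sqrt 2)⁻¹ := by
  obtain ⟨hf0, hf1⟩ := hf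
  have hs : Real.sqrt 2 > 0 := by positivity
  have hs2 : Real.sqrt 2 * Real.sqrt 2 = 2 := Real.mul_self_sqrt (by norm_num)
  set s := Real.sqrt 2 with hsdef
  -- the four images
  have h0 : stabNorm1 (Λ (pauli1 0)) = 1 := by
    have e0 : Λ (pauli1 0) = 1 := by
      rw [hΛ, conj1]
      ext i j
      fin_cases i <;> fin_cases j <;>
        simp [pauli1, Matrix.trace_fin_two, Matrix.one_apply] <;> push_cast <;> ring
    rw [stabNorm1, Fin.sum_univ_four, e0]
    simp [pauli1, trace_mul_fin_two, Matrix.one_apply]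
  have h1 : stabNorm1 (Λ (pauli1 1)) = f * s := by
    have e1 : Λ (pauli1 1) =
        !![0, (f:ℂ) * (↑(s/2) - ↑(s/2)*Complex.I);
           (f:ℂ) * (↑(s/2) + ↑(s/2)*Complex.I), 0] := by
      rw [hΛ, conj1, expm, expp, ← hsdef]
      ext i j
      fin_cases i <;> fin_cases j <;>
        simp [pauli1, Matrix.trace_fin_two] <;> ring
    rw [stabNorm1, Fin.sum_univ_four, e1]
    simp only [pauli1, trace_mul_fin_two]
    norm_num [Matrix.cons_val_zero, Matrix.cons_val_one, Matrix.one_apply, Matrix.cons_val_two, vec4_three]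
    rw [show (↑f * (↑s / 2 + ↑s / 2 * Complex.I) + ↑f * (↑s / 2 - ↑s / 2 * Complex.I) : ℂ)
          = ((f*s:ℝ):ℂ) by push_cast; ring,
        show (-(Complex.I * (↑f * (↑s / 2 + ↑s / 2 * Complex.I))) +
              Complex.I * (↑f * (↑s / 2 - ↑s / 2 * Complex.I)) : ℂ) = ((f*s:ℝ):ℂ) by
          push_cast; linear_combination (-(f:ℂ)*(s:ℝ)) * Complex.I_sq,
        Complex.norm_real, Real.norm_eq_abs, abs_of_nonneg (by positivity)]
    ring
  have h2 : stabNorm1 (Λ (pauli1 2)) = f * s := by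
    have e2 : Λ (pauli1 2) =
        !![0, (f:ℂ) * (↑(s/2) - ↑(s/2)*Complex.I) * (-Complex.I);
           (f:ℂ) * (↑(s/2) + ↑(s/2)*Complex.I) * Complex.I, 0] := by
      rw [hΛ, conj1, expm, expp, ← hsdef]
      ext i j
      fin_cases i <;> fin_cases j <;>
        simp [pauli1, Matrix.trace_fin_two] <;> ring
    rw [stabNorm1, Fin.sum_univ_four, e2]
    simp only [pauli1, trace_mul_fin_two]
    norm_num [Matrix.cons_val_zero, Matrix.cons_val_one, Matrix.one_apply, Matrix.cons_val_two, vec4_three]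
    rw [show (↑f * (↑s / 2 + ↑s / 2 * Complex.I) * Complex.I +
          -(↑f * (↑s / 2 - ↑s / 2 * Complex.I) * Complex.I) : ℂ) = ((-(f*s):ℝ):ℂ) by
        push_cast; linear_combination ((f:ℂ)*(s:ℝ)) * Complex.I_sq,
      show (-(Complex.I * (↑f * (↑s / 2 + ↑s / 2 * Complex.I) * Complex.I)) +
          -(Complex.I * (↑f * (↑s / 2 - ↑s / 2 * Complex.I) * Complex.I)) : ℂ) = ((f*s:ℝ):ℂ) by
        push_cast; linear_combination (-(f:ℂ)*(s:ℝ)) * Complex.I_sq,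
      Complex.norm_real, Complex.norm_real, Real.norm_eq_abs, Real.norm_eq_abs, abs_neg, abs_of_nonneg (by positivity)]
    ring
  have h3 : stabNorm1 (Λ (pauli1 3)) = f := by
    have e3 : Λ (pauli1 3) = !![(f:ℂ), 0; 0, -(f:ℂ)] := by
      rw [hΛ, conj1, expm, expp, ← hsdef]
      ext i j
      fin_cases i <;> fin_cases j <;>
        simp [pauli1, Matrix.trace_fin_two] <;> ring
    rw [stabNorm1, Fin.sum_univ_four, e3]
    simp only [pauli1, trace_mul_fin_two]
    norm_num [Matrix.cons_val_zero, Matrix.cons_val_one, Matrix.one_apply, Matrix.cons_val_two, vec4_three]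
    rw [show ((f:ℂ) + f) = ((2*f:ℝ):ℂ) by push_cast; ring,
      Complex.norm_real, Real.norm_eq_abs, abs_of_nonneg (by positivity)]
    ring
  have hbdd : BddAbove (Set.range fun i : Fin 4 => stabNorm1 (Λ (pauli1 i))) :=
    Set.Finite.bddAbove (Set.finite_range _)
  have hinv : s⁻¹ * s = 1 := inv_mul_cancel₀ hs.ne'
  constructor
  · intro h
    have hle : stabNorm1 (Λ (pauli1 1)) ≤ 1 := le_trans (le_ciSup hbdd 1) h
    rw [h1] at hle
    exact le_of_mul_le_mul_right (by rw [hinv]; exact hle) hs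
  · intro h
    apply ciSup_le
    intro i
    fin_cases i
    · exact le_of_eq h0
    · exact le_trans (le_of_eq h1) (by rw [← hinv]; exact mul_le_mul_of_nonneg_right h hs.le)
    · exact le_trans (le_of_eq h2) (by rw [← hinv]; exact mul_le_mul_of_nonneg_right h hs.le)
    · exact le_trans (le_of_eq h3) hf1
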